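/- Let n ≥ 2 and k ≥ 0. The element c_k ∈ T_n has order exactly (k+1)(n−1)+1. In particular, T_n contains torsion elements of arbitrarily large order. -/

import Mathlib

noncomputable section

namespace ThompsonPaper

/-- The circle `ℝ/ℤ`. -/
abbrev Circle : Type := AddCircle (1 : ℝ)

/-- Homeomorphisms of a topological space form a group under composition,
with `(f * g) x = f (g x)`. -/
instance homeoGroup {α : Type*} [TopologicalSpace α] : Group (α ≃ₜ α) where
  mul f g := g.trans f
  one := Homeomorph.refl α
  inv := Homeomorph.symm
  mul_assoc _ _ _ := Homeomorph.ext fun _ => rfl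
  one_mul _ := Homeomorph.ext fun _ => rfl
  mul_one _ := Homeomorph.ext fun _ => rfl
  inv_mul_cancel f := Homeomorph.ext fun x => f.symm_apply_apply x

/-- `x` is an `n`-adic rational: `x = a / n ^ k` with `a` an integer, `k` a natural number. -/
def IsNAdic (n : ℕ) (x : ℝ) : Prop := ∃ a : ℤ, ∃ k : ℕ, x = (a : ℝ) / (n : ℝ) ^ k

/-- The set of `n`-adic points of the circle. -/
def nAdicPoints (n : ℕ) : Set Circle := { p | ∃ x : ℝ, IsNAdic n x ∧ p = (x : Circle) }

/-- `F : ℝ → ℝ` is a lift of the circle map `f`. -/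
def IsLift (f : Circle ≃ₜ Circle) (F : ℝ → ℝ) : Prop :=
  ∀ x : ℝ, f (x : Circle) = ((F x : ℝ) : Circle)

/-- `F : ℝ → ℝ` commutes with translation by `1` and is piecewise affine with finitely
many breakpoints (modulo `1`), all breakpoints at `n`-adic rationals, and with the slope
of every affine piece an integer power of `n`. -/
def PiecewiseNAffine (n : ℕ) (F : ℝ → ℝ) : Prop :=
  (∀ x : ℝ, F (x + 1) = F x + 1) ∧
  ∃ m : ℕ, ∃ t : ℕ → ℝ, ∃ slope : ℕ → ℤ, ∃ c : ℕ → ℝ,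
    0 < m ∧ t 0 = 0 ∧ t m = 1 ∧
    (∀ i, i < m → t i < t (i + 1)) ∧
    (∀ i, i ≤ m → IsNAdic n (t i)) ∧
    (∀ i, i < m → ∀ x ∈ Set.Icc (t i) (t (i + 1)),
      F x = (n : ℝ) ^ (slope i) * x + c i)

/-- Membership in Thompson's group `T_n`: an orientation-preserving homeomorphism of the
circle `ℝ/ℤ` mapping the set of `n`-adic points onto itself, which is piecewise affine
with finitely many breakpoints, all breakpoints at `n`-adic points, and all slopes integer
powers of `n`.  (Orientation preservation and the piecewise affine structure are expressed
through a strictly increasing lift.) -/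
def InT (n : ℕ) (f : Circle ≃ₜ Circle) : Prop :=
  f '' nAdicPoints n = nAdicPoints n ∧
  ∃ F : ℝ → ℝ, StrictMono F ∧ IsLift f F ∧ PiecewiseNAffine n F

/-- Thompson's group `T_n`, as a set of circle homeomorphisms. -/
def TnSet (n : ℕ) : Set (Circle ≃ₜ Circle) := { f | InT n f }

/-- The left endpoints of the standard `n`-adic subdivision `P_k` obtained by `k+1`
subdivision steps, each applied to the rightmost interval, listed in increasing order;
the index `j = (k+1)*(n-1)+1` gives the final right endpoint `1`. -/
def ckPt (n k j : ℕ) : ℝ :=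
  if j = (k + 1) * (n - 1) + 1 then 1
  else (1 - (n : ℝ) ^ (-(j / (n - 1) : ℕ) : ℤ)) +
    (j % (n - 1) : ℕ) * (n : ℝ) ^ (-((j / (n - 1) : ℕ) + 1 : ℕ) : ℤ)

/-- `f` is the element `c_k` of `T_n`: writing `m = (k+1)(n-1)+1` and
`I_0, …, I_{m-1}` for the intervals of the standard subdivision `P_k`, `f` maps each
`I_j` affinely onto `I_{(j+1) mod m}`. -/
def IsCk (n k : ℕ) (f : Circle ≃ₜ Circle) : Prop :=
  ∀ j < (k + 1) * (n - 1) + 1, ∀ x ∈ Set.Icc (ckPt n k j) (ckPt n k (j + 1)),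
    f (x : Circle) =
      ((ckPt n k ((j + 1) % ((k + 1) * (n - 1) + 1)) +
        (ckPt n k ((j + 1) % ((k + 1) * (n - 1) + 1) + 1) -
          ckPt n k ((j + 1) % ((k + 1) * (n - 1) + 1))) /
          (ckPt n k (j + 1) - ckPt n k j) * (x - ckPt n k j) : ℝ) : Circle)

/-! ### Auxiliary development for `ck_orderOf` -/

section CkAux
open Finset

/-- Number of intervals of the partition `P_k`. -/
def ckM (n k : ℕ) : ℕ := (k + 1) * (n - 1) + 1

/-- Exponent of the length of the `j`-th interval: `len j = n ^ (-expo)`. -/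
def ckExpo (n k j : ℕ) : ℕ := if j + 1 = ckM n k then k + 1 else j / (n - 1) + 1

/-- Slope exponent of `c_k` on the `j`-th interval. -/
def ckSl (n k j : ℕ) : ℤ :=
  (ckExpo n k j : ℤ) - (ckExpo n k ((j + 1) % ckM n k) : ℤ)

lemma ckM_pos (n k : ℕ) : 0 < ckM n k := Nat.succ_pos _

lemma ckPt_M (n k : ℕ) : ckPt n k (ckM n k) = 1 := by simp [ckPt, ckM]

lemma npow_neg_eq (n q : ℕ) : (n : ℝ) ^ (-(q : ℤ)) = ((n : ℝ) ^ q)⁻¹ := by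
  rw [zpow_neg, zpow_natCast]

variable {n k : ℕ}

lemma nR_pos (hn : 2 ≤ n) : (0 : ℝ) < n := by
  have : 0 < n := by omega
  exact_mod_cast this

lemma nR_one_lt (hn : 2 ≤ n) : (1 : ℝ) < n := by exact_mod_cast (by omega : 1 < n)

lemma nR_ne_zero (hn : 2 ≤ n) : (n : ℝ) ≠ 0 := ne_of_gt (nR_pos hn)

lemma ckPt_zero (hn : 2 ≤ n) : ckPt n k 0 = 0 := by
  have h0 : (0 : ℕ) ≠ (k + 1) * (n - 1) + 1 := by omega
  simp [ckPt, h0]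

lemma ckPt_eq (hn : 2 ≤ n) {j : ℕ} (hj : j ≠ ckM n k) :
    ckPt n k j = 1 - ((n : ℝ) ^ (j / (n - 1)))⁻¹
      + (j % (n - 1) : ℕ) * ((n : ℝ) ^ (j / (n - 1) + 1))⁻¹ := by
  rw [ckPt, if_neg (by simpa [ckM] using hj), npow_neg_eq, npow_neg_eq]

/-- The key gap computation: each interval of `P_k` has length a power of `n`. -/
lemma ckPt_gap (hn : 2 ≤ n) {j : ℕ} (hj : j < ckM n k) :
    ckPt n k (j + 1) - ckPt n k j = ((n : ℝ) ^ (ckExpo n k j))⁻¹ := by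
  have hw : 0 < n - 1 := by omega
  have hN0 : (n : ℝ) ≠ 0 := nR_ne_zero hn
  by_cases hjM : j + 1 = ckM n k
  · -- last interval
    have hj' : j = (k + 1) * (n - 1) := by simpa [ckM] using hjM
    have hq : j / (n - 1) = k + 1 := by rw [hj']; exact Nat.mul_div_cancel _ hw
    have hr : j % (n - 1) = 0 := by rw [hj']; exact Nat.mul_mod_left _ _
    rw [hjM, ckPt_M, ckPt_eq hn (by omega), ckExpo, if_pos hjM, hq, hr]
    push_cast
    ring
  · have hjM' : j + 1 < ckM n k := lt_of_le_of_ne hj hjM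
    set q := j / (n - 1) with hqdef
    set r := j % (n - 1) with hrdef
    have hq : q * (n - 1) + r = j := by
      rw [hqdef, hrdef, mul_comm]; exact Nat.div_add_mod j (n - 1)
    have hr : r < n - 1 := Nat.mod_lt _ hw
    rw [ckExpo, if_neg hjM, ckPt_eq hn (by omega), ckPt_eq hn (by omega)]
    by_cases hr2 : r + 1 < n - 1
    · -- stay in the same block
      have hj1 : j + 1 = (r + 1) + q * (n - 1) := by omega
      have hdiv : (j + 1) / (n - 1) = q := by
        rw [hj1, Nat.add_mul_div_right _ _ hw, Nat.div_eq_of_lt hr2, Nat.zero_add]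
      have hmod : (j + 1) % (n - 1) = r + 1 := by
        rw [hj1, Nat.add_mul_mod_self_right, Nat.mod_eq_of_lt hr2]
      rw [hdiv, hmod]
      push_cast
      ring
    · -- cross into the next block
      have hr3 : r + 1 = n - 1 := by omega
      have hj1 : j + 1 = (q + 1) * (n - 1) := by
        calc j + 1 = q * (n - 1) + (r + 1) := by omega
        _ = (q + 1) * (n - 1) := by rw [← hr3]; ring
      have hdiv : (j + 1) / (n - 1) = q + 1 := by
        rw [hj1, Nat.mul_div_cancel _ hw]
      have hmod : (j + 1) % (n - 1) = 0 := by rw [hj1, Nat.mul_mod_left]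
      rw [hdiv, hmod]
      have hrR : (r : ℝ) = (n : ℝ) - 2 := by
        have h1 : (1 : ℕ) ≤ n := by omega
        have h2 := congrArg (fun m : ℕ => (m : ℝ)) hr3
        simp only [Nat.cast_add, Nat.cast_one, Nat.cast_sub h1] at h2
        linarith
      rw [hrR]
      have hpow : (n : ℝ) ^ (q + 1) = (n : ℝ) ^ q * n := by ring
      field_simp
      ring

lemma ckExpo_pos (n k j : ℕ) : 1 ≤ ckExpo n k j := by
  unfold ckExpo
  split
  · omega
  · exact Nat.succ_le_succ (Nat.zero_le _)

lemma ckExpo_le (hn : 2 ≤ n) {j : ℕ} (hj : j < ckM n k) : ckExpo n k j ≤ k + 1 := by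
  unfold ckExpo
  split
  · exact le_rfl
  · rename_i h
    have hw : 0 < n - 1 := by omega
    have hjlt : j < (k + 1) * (n - 1) := by
      have h2 : j + 1 < ckM n k := lt_of_le_of_ne hj h
      simp only [ckM] at h2
      omega
    have := (Nat.div_lt_iff_lt_mul hw).mpr hjlt
    omega

lemma ckPt_gap_pos (hn : 2 ≤ n) {j : ℕ} (hj : j < ckM n k) :
    0 < ckPt n k (j + 1) - ckPt n k j := by
  rw [ckPt_gap hn hj]
  positivity

lemma ckPt_lt_of_lt (hn : 2 ≤ n) {i j : ℕ} (hij : i < j) (hj : j ≤ ckM n k) :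
    ckPt n k i < ckPt n k j := by
  induction j with
  | zero => omega
  | succ m ih =>
    have hm : m < ckM n k := by omega
    rcases Nat.lt_or_ge i m with h | h
    · exact lt_trans (ih h (by omega)) (by linarith [ckPt_gap_pos (k := k) hn hm])
    · have : i = m := by omega
      subst this
      linarith [ckPt_gap_pos (k := k) hn hm]

lemma ckPt_mono (hn : 2 ≤ n) {i j : ℕ} (hij : i ≤ j) (hj : j ≤ ckM n k) :
    ckPt n k i ≤ ckPt n k j := by
  rcases eq_or_lt_of_le hij with rfl | h
  · exact le_rfl
  · exact le_of_lt (ckPt_lt_of_lt hn h hj)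

lemma ckPt_nonneg (hn : 2 ≤ n) {j : ℕ} (hj : j ≤ ckM n k) : 0 ≤ ckPt n k j := by
  have := ckPt_mono (k := k) hn (Nat.zero_le j) hj
  rwa [ckPt_zero hn] at this

lemma ckPt_le_one (hn : 2 ≤ n) {j : ℕ} (hj : j ≤ ckM n k) : ckPt n k j ≤ 1 := by
  have := ckPt_mono (k := k) hn hj le_rfl
  rwa [ckPt_M] at this

lemma ckPt_lt_one (hn : 2 ≤ n) {j : ℕ} (hj : j < ckM n k) : ckPt n k j < 1 := by
  have := ckPt_lt_of_lt (k := k) hn hj le_rfl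
  rwa [ckPt_M] at this

/-- Covering: every `x ∈ [0,1)` lies in some interval of the partition. -/
lemma ckPt_covering (hn : 2 ≤ n) {x : ℝ} (hx0 : 0 ≤ x) (hx1 : x < 1) :
    ∃ j < ckM n k, ckPt n k j ≤ x ∧ x < ckPt n k (j + 1) := by
  classical
  set P : ℕ → Prop := fun i => ckPt n k i ≤ x with hP
  have hP0 : P 0 := by rw [hP]; simpa [ckPt_zero (k := k) hn] using hx0
  set j := Nat.findGreatest P (ckM n k - 1) with hj
  have hjle : j ≤ ckM n k - 1 := Nat.findGreatest_le _
  have hPj : P j := Nat.findGreatest_spec (Nat.zero_le _) hP0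
  have hM1 := ckM_pos n k
  refine ⟨j, by omega, hPj, ?_⟩
  rcases Nat.lt_or_ge (j + 1) (ckM n k) with h | h
  · by_contra hcon
    push_neg at hcon
    have := Nat.findGreatest_is_greatest (Nat.lt_succ_self j) (by omega)
    exact this hcon
  · have : j + 1 = ckM n k := by omega
    rw [this, ckPt_M]; exact hx1

lemma ckSl_mul_gap (hn : 2 ≤ n) {j : ℕ} (hj : j < ckM n k) :
    (n : ℝ) ^ (ckSl n k j) * (ckPt n k (j + 1) - ckPt n k j) =
      ckPt n k ((j + 1) % ckM n k + 1) - ckPt n k ((j + 1) % ckM n k) := by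
  have hj' : (j + 1) % ckM n k < ckM n k := Nat.mod_lt _ (ckM_pos n k)
  rw [ckPt_gap hn hj, ckPt_gap hn hj', ckSl]
  have hN0 : (n : ℝ) ≠ 0 := nR_ne_zero hn
  rw [zpow_sub₀ hN0, zpow_natCast, zpow_natCast]
  field_simp

lemma ckSl_pow_pos (hn : 2 ≤ n) (j : ℕ) : 0 < (n : ℝ) ^ (ckSl n k j) :=
  zpow_pos (nR_pos hn) _

lemma ckSl_ge (hn : 2 ≤ n) (j : ℕ) : -(k : ℤ) ≤ ckSl n k j := by
  have h1 := ckExpo_pos n k j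
  have h2 := ckExpo_le (k := k) hn (Nat.mod_lt (j + 1) (ckM_pos n k))
  rw [ckSl]
  omega

/-- Cyclically reordering a sum over `range m`. -/
lemma sum_cycle {M : Type*} [AddCommMonoid M] (g : ℕ → M) (m : ℕ) (hm : 0 < m) :
    ∑ i ∈ Finset.range m, g ((i + 1) % m) = ∑ i ∈ Finset.range m, g i := by
  refine Finset.sum_bij' (fun a _ => (a + 1) % m) (fun b _ => (b + (m - 1)) % m)
    ?_ ?_ ?_ ?_ ?_
  · intro a ha
    exact Finset.mem_range.mpr (Nat.mod_lt _ hm)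
  · intro b hb
    exact Finset.mem_range.mpr (Nat.mod_lt _ hm)
  · intro a ha
    simp only [Finset.mem_range] at ha
    show ((a + 1) % m + (m - 1)) % m = a
    rw [Nat.mod_add_mod, Nat.add_assoc, (by omega : 1 + (m - 1) = m),
      Nat.add_mod_right, Nat.mod_eq_of_lt ha]
  · intro b hb
    simp only [Finset.mem_range] at hb
    show ((b + (m - 1)) % m + 1) % m = b
    rw [Nat.mod_add_mod, Nat.add_assoc, (by omega : m - 1 + 1 = m),
      Nat.add_mod_right, Nat.mod_eq_of_lt hb]
  · intro a ha
    rfl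

/-- The building block of the lift: `min`-difference. -/
lemma min_diff_mono {a b x y : ℝ} (hab : a ≤ b) (hxy : x ≤ y) :
    min x b - min x a ≤ min y b - min y a := by
  simp only [min_def]
  split_ifs <;> linarith

lemma min_diff_nonneg {a b x : ℝ} (hab : a ≤ b) : 0 ≤ min x b - min x a := by
  simp only [min_def]
  split_ifs <;> linarith

/-- The lift of `c_k` on `[0,1]`. -/
def ckF0 (n k : ℕ) (x : ℝ) : ℝ :=
  ckPt n k 1 + ∑ j ∈ Finset.range (ckM n k),
    (n : ℝ) ^ (ckSl n k j) * (min x (ckPt n k (j + 1)) - min x (ckPt n k j))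

/-- The lift of `c_k`. -/
def ckF (n k : ℕ) (x : ℝ) : ℝ := ckF0 n k (Int.fract x) + ⌊x⌋

lemma ckF0_continuous (n k : ℕ) : Continuous (ckF0 n k) := by
  refine continuous_const.add (continuous_finset_sum _ fun j _ => ?_)
  exact continuous_const.mul
    ((continuous_id.min continuous_const).sub (continuous_id.min continuous_const))

lemma ckF0_on (hn : 2 ≤ n) {j : ℕ} (hj : j < ckM n k) {x : ℝ}
    (hx : x ∈ Set.Icc (ckPt n k j) (ckPt n k (j + 1))) :
    ckF0 n k x = ckPt n k (j + 1) + (n : ℝ) ^ (ckSl n k j) * (x - ckPt n k j) := by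
  obtain ⟨hx1, hx2⟩ := hx
  rw [ckF0]
  have hsplit : Finset.range (ckM n k) = Finset.Ico 0 (ckM n k) := by
    rw [Finset.range_eq_Ico]
  rw [hsplit, ← Finset.sum_Ico_consecutive _ (Nat.zero_le j) (le_of_lt hj),
    Finset.sum_eq_sum_Ico_succ_bot hj]
  have h1 : ∀ i ∈ Finset.Ico 0 j,
      (n : ℝ) ^ (ckSl n k i) * (min x (ckPt n k (i + 1)) - min x (ckPt n k i)) =
        ckPt n k (i + 1 + 1) - ckPt n k (i + 1) := by
    intro i hi
    have hij : i < j := by simpa using hi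
    have hi1 : i + 1 < ckM n k := by omega
    have ha : ckPt n k (i + 1) ≤ x :=
      le_trans (ckPt_mono hn (by omega) (le_of_lt hj)) hx1
    have hb : ckPt n k i ≤ x :=
      le_trans (ckPt_mono hn (by omega) (le_of_lt hj)) hx1
    rw [min_eq_right ha, min_eq_right hb]
    have := ckSl_mul_gap (k := k) hn (by omega : i < ckM n k)
    rwa [Nat.mod_eq_of_lt hi1] at this
  rw [Finset.sum_congr rfl h1]
  have h2 : ∀ i ∈ Finset.Ico (j + 1) (ckM n k),
      (n : ℝ) ^ (ckSl n k i) * (min x (ckPt n k (i + 1)) - min x (ckPt n k i)) = 0 := by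
    intro i hi
    simp only [Finset.mem_Ico] at hi
    have ha : x ≤ ckPt n k i := le_trans hx2 (ckPt_mono hn hi.1 (le_of_lt hi.2))
    have hb : x ≤ ckPt n k (i + 1) := le_trans ha (ckPt_mono hn (Nat.le_succ i) hi.2)
    rw [min_eq_left ha, min_eq_left hb]
    ring
  rw [Finset.sum_congr rfl h2]
  have h3 : ∑ i ∈ Finset.Ico 0 j, (ckPt n k (i + 1 + 1) - ckPt n k (i + 1)) =
      ckPt n k (j + 1) - ckPt n k 1 := by
    rw [← Finset.range_eq_Ico]
    exact Finset.sum_range_sub (fun i => ckPt n k (i + 1)) j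
  rw [h3]
  have hminx : min x (ckPt n k (j + 1)) = x := min_eq_left hx2
  have hminj : min x (ckPt n k j) = ckPt n k j := min_eq_right hx1
  rw [hminx, hminj]
  simp
  ring

lemma ckF0_telescope (u : ℝ) :
    ∑ i ∈ Finset.range (ckM n k), (min u (ckPt n k (i + 1)) - min u (ckPt n k i)) =
      min u (ckPt n k (ckM n k)) - min u (ckPt n k 0) :=
  Finset.sum_range_sub (fun i => min u (ckPt n k i)) _

lemma ckF0_mono (hn : 2 ≤ n) : Monotone (ckF0 n k) := by
  intro x y hxy
  rw [ckF0, ckF0]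
  refine add_le_add le_rfl (Finset.sum_le_sum fun i hi => ?_)
  simp only [Finset.mem_range] at hi
  refine mul_le_mul_of_nonneg_left ?_ (le_of_lt (ckSl_pow_pos hn i))
  exact min_diff_mono (ckPt_mono hn (Nat.le_succ i) hi) hxy

lemma ckF0_strict (hn : 2 ≤ n) {x y : ℝ} (hx : x ∈ Set.Icc (0:ℝ) 1)
    (hy : y ∈ Set.Icc (0:ℝ) 1) (hxy : x < y) : ckF0 n k x < ckF0 n k y := by
  have hkey : (n : ℝ) ^ (-(k : ℤ)) * (y - x) ≤ ckF0 n k y - ckF0 n k x := by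
    rw [ckF0, ckF0]
    have hsub : ckF0 n k y - ckF0 n k x = ∑ i ∈ Finset.range (ckM n k),
        (n : ℝ) ^ (ckSl n k i) *
          ((min y (ckPt n k (i + 1)) - min y (ckPt n k i)) -
           (min x (ckPt n k (i + 1)) - min x (ckPt n k i))) := by
      rw [ckF0, ckF0, add_sub_add_left_eq_sub, ← Finset.sum_sub_distrib]
      exact Finset.sum_congr rfl fun i _ => by ring
    rw [← ckF0, ← ckF0, hsub]
    calc (n : ℝ) ^ (-(k : ℤ)) * (y - x)
        = ∑ i ∈ Finset.range (ckM n k), (n : ℝ) ^ (-(k : ℤ)) *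
          ((min y (ckPt n k (i + 1)) - min y (ckPt n k i)) -
           (min x (ckPt n k (i + 1)) - min x (ckPt n k i))) := by
          rw [← Finset.mul_sum]
          congr 1
          rw [Finset.sum_sub_distrib, ckF0_telescope, ckF0_telescope, ckPt_M,
            ckPt_zero hn]
          rw [min_eq_left hy.2, min_eq_left hx.2,
            min_eq_right hy.1, min_eq_right hx.1]
          ring
      _ ≤ _ := by
          refine Finset.sum_le_sum fun i hi => ?_
          simp only [Finset.mem_range] at hi
          have hd : 0 ≤ (min y (ckPt n k (i + 1)) - min y (ckPt n k i)) -
              (min x (ckPt n k (i + 1)) - min x (ckPt n k i)) := by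
            have := min_diff_mono (a := ckPt n k i) (b := ckPt n k (i + 1))
              (ckPt_mono hn (Nat.le_succ i) hi) (le_of_lt hxy)
            linarith
          refine mul_le_mul_of_nonneg_right ?_ hd
          exact zpow_le_zpow_right₀ (le_of_lt (nR_one_lt hn)) (ckSl_ge hn i)
  have hpos : 0 < (n : ℝ) ^ (-(k : ℤ)) * (y - x) := by
    have := zpow_pos (nR_pos hn) (-(k : ℤ))
    nlinarith
  linarith

lemma ckF0_zero (hn : 2 ≤ n) : ckF0 n k 0 = ckPt n k 1 := by
  rw [ckF0]
  have : ∀ i ∈ Finset.range (ckM n k),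
      (n : ℝ) ^ (ckSl n k i) * (min 0 (ckPt n k (i + 1)) - min 0 (ckPt n k i)) = 0 := by
    intro i hi
    simp only [Finset.mem_range] at hi
    rw [min_eq_left (ckPt_nonneg hn (by omega)), min_eq_left (ckPt_nonneg hn (by omega))]
    ring
  rw [Finset.sum_congr rfl this]
  simp

lemma ckF0_one (hn : 2 ≤ n) : ckF0 n k 1 = ckPt n k 1 + 1 := by
  rw [ckF0]
  have hcong : ∀ i ∈ Finset.range (ckM n k),
      (n : ℝ) ^ (ckSl n k i) * (min 1 (ckPt n k (i + 1)) - min 1 (ckPt n k i)) =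
        ckPt n k ((i + 1) % ckM n k + 1) - ckPt n k ((i + 1) % ckM n k) := by
    intro i hi
    simp only [Finset.mem_range] at hi
    rw [min_eq_right (ckPt_le_one hn (by omega)), min_eq_right (ckPt_le_one hn (by omega))]
    exact ckSl_mul_gap hn hi
  rw [Finset.sum_congr rfl hcong,
    sum_cycle (fun i => ckPt n k (i + 1) - ckPt n k i) _ (ckM_pos n k),
    Finset.sum_range_sub (fun i => ckPt n k i), ckPt_M, ckPt_zero hn]
  ring

lemma ckF_add_int (n k : ℕ) (x : ℝ) (z : ℤ) : ckF n k (x + z) = ckF n k x + z := by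
  rw [ckF, ckF, Int.fract_add_intCast, Int.floor_add_intCast]
  push_cast
  ring

lemma ckF_eq_F0 (hn : 2 ≤ n) {x : ℝ} (hx : x ∈ Set.Icc (0:ℝ) 1) :
    ckF n k x = ckF0 n k x := by
  rcases eq_or_lt_of_le hx.2 with h1 | h1
  · subst h1
    rw [ckF]
    norm_num [Int.fract_one, Int.floor_one]
    rw [ckF0_zero hn, ckF0_one hn]
  · rw [ckF, Int.fract_eq_self.mpr ⟨hx.1, h1⟩, Int.floor_eq_zero_iff.mpr ⟨hx.1, h1⟩]
    simp

lemma ckF_strictMono (hn : 2 ≤ n) : StrictMono (ckF n k) := by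
  intro x y hxy
  have hfx : Int.fract x ∈ Set.Icc (0:ℝ) 1 :=
    ⟨Int.fract_nonneg x, le_of_lt (Int.fract_lt_one x)⟩
  have hfy : Int.fract y ∈ Set.Icc (0:ℝ) 1 :=
    ⟨Int.fract_nonneg y, le_of_lt (Int.fract_lt_one y)⟩
  rcases eq_or_lt_of_le (Int.le_floor.mpr ((Int.floor_le x).trans (le_of_lt hxy)) :
      ⌊x⌋ ≤ ⌊y⌋) with hf | hf
  · have hfr : Int.fract x < Int.fract y := by
      rw [Int.fract, Int.fract, ← hf]
      linarith
    rw [ckF, ckF, ← hf]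
    have := ckF0_strict (k := k) hn hfx hfy hfr
    linarith
  · rw [ckF, ckF]
    have h1 : ckF0 n k (Int.fract x) < ckF0 n k 1 :=
      ckF0_strict hn hfx ⟨zero_le_one, le_rfl⟩ (Int.fract_lt_one x)
    have h2 : ckF0 n k 0 ≤ ckF0 n k (Int.fract y) := ckF0_mono hn hfy.1
    rw [ckF0_one hn] at h1
    rw [ckF0_zero hn] at h2
    have : (⌊x⌋ : ℝ) + 1 ≤ (⌊y⌋ : ℝ) := by exact_mod_cast hf
    linarith

lemma ckF_surjective (hn : 2 ≤ n) : Function.Surjective (ckF n k) := by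
  intro y
  set z := ⌊y - ckPt n k 1⌋ with hz
  have h1 : ckPt n k 1 ≤ y - z := by
    have := Int.floor_le (y - ckPt n k 1)
    rw [← hz] at this
    linarith
  have h2 : y - z ≤ ckPt n k 1 + 1 := by
    have := Int.lt_floor_add_one (y - ckPt n k 1)
    rw [← hz] at this
    linarith
  have hIVT := intermediate_value_Icc (zero_le_one (α := ℝ))
    (ckF0_continuous n k).continuousOn (a := (0:ℝ)) (b := 1)
  have hy : y - z ∈ Set.Icc (ckF0 n k 0) (ckF0 n k 1) := by
    rw [ckF0_zero hn, ckF0_one hn]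
    exact ⟨h1, h2⟩
  obtain ⟨x, hx, hFx⟩ := hIVT hy
  refine ⟨x + z, ?_⟩
  rw [ckF_add_int, ckF_eq_F0 hn hx, hFx]
  ring

/-- The lift restricted to an interval of the partition is the expected affine map. -/
lemma ckF_on (hn : 2 ≤ n) {j : ℕ} (hj : j < ckM n k) {x : ℝ}
    (hx : x ∈ Set.Icc (ckPt n k j) (ckPt n k (j + 1))) :
    ckF n k x = ckPt n k (j + 1) + (n : ℝ) ^ (ckSl n k j) * (x - ckPt n k j) := by
  have h0 : (0:ℝ) ≤ x := le_trans (ckPt_nonneg hn (le_of_lt hj)) hx.1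
  have h1 : x ≤ 1 := le_trans hx.2 (ckPt_le_one hn hj)
  rw [ckF_eq_F0 hn ⟨h0, h1⟩, ckF0_on hn hj hx]

/-- The lift as an order isomorphism of `ℝ`. -/
def ckIso (n k : ℕ) (hn : 2 ≤ n) : ℝ ≃o ℝ :=
  StrictMono.orderIsoOfSurjective (ckF n k) (ckF_strictMono hn) (ckF_surjective hn)

lemma ckIso_apply (hn : 2 ≤ n) (x : ℝ) : ckIso n k hn x = ckF n k x :=
  congrFun (StrictMono.coe_orderIsoOfSurjective _ _ _) x

lemma ckIso_symm_add_int (hn : 2 ≤ n) (x : ℝ) (z : ℤ) :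
    (ckIso n k hn).symm (x + z) = (ckIso n k hn).symm x + z := by
  apply (ckF_strictMono (k := k) hn).injective
  have h1 : ckF n k ((ckIso n k hn).symm (x + z)) = x + z := by
    rw [← ckIso_apply hn]; exact (ckIso n k hn).apply_symm_apply (x + z)
  have h2 : ckF n k ((ckIso n k hn).symm x) = x := by
    rw [← ckIso_apply hn]; exact (ckIso n k hn).apply_symm_apply x
  rw [h1, ckF_add_int, h2]

lemma circle_coe_add_int (x : ℝ) (z : ℤ) : ((x + z : ℝ) : Circle) = (x : Circle) := by
  rw [QuotientAddGroup.eq_iff_sub_mem]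
  simp only [add_sub_cancel_left]
  exact ⟨z, by simp⟩

lemma circle_rel {a b : ℝ} (h : (QuotientAddGroup.leftRel (AddSubgroup.zmultiples (1:ℝ))) a b) :
    ∃ z : ℤ, b = a + z := by
  rw [QuotientAddGroup.leftRel_apply] at h
  obtain ⟨z, hz⟩ := h
  exact ⟨z, by simp at hz; linarith⟩

lemma circle_rel_of (a : ℝ) (z : ℤ) :
    (QuotientAddGroup.leftRel (AddSubgroup.zmultiples (1:ℝ))) a (a + z) := by
  rw [QuotientAddGroup.leftRel_apply]
  exact ⟨z, by simp⟩

/-- The setoid underlying the circle. -/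
abbrev cSet : Setoid ℝ := QuotientAddGroup.leftRel (AddSubgroup.zmultiples (1:ℝ))

lemma ckF_resp (n k : ℕ) : ∀ a b : ℝ, cSet a b → cSet (ckF n k a) (ckF n k b) := by
  intro a b hab
  obtain ⟨z, rfl⟩ := circle_rel hab
  rw [ckF_add_int]
  exact circle_rel_of _ z

lemma ckFsymm_resp (n k : ℕ) (hn : 2 ≤ n) :
    ∀ a b : ℝ, cSet a b → cSet ((ckIso n k hn).symm a) ((ckIso n k hn).symm b) := by
  intro a b hab
  obtain ⟨z, rfl⟩ := circle_rel hab
  rw [ckIso_symm_add_int]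
  exact circle_rel_of _ z

lemma ckF_continuous (n k : ℕ) (hn : 2 ≤ n) : Continuous (ckF n k) := by
  have h := (ckIso n k hn).toHomeomorph.continuous
  have he : ⇑(ckIso n k hn).toHomeomorph = ckF n k := funext (ckIso_apply hn)
  rwa [he] at h

lemma ckFsymm_continuous (n k : ℕ) (hn : 2 ≤ n) : Continuous ⇑(ckIso n k hn).symm :=
  (ckIso n k hn).toHomeomorph.symm.continuous

/-- The homeomorphism `c_k` of the circle. -/
def ckHomeo (n k : ℕ) (hn : 2 ≤ n) : Circle ≃ₜ Circle where
  toFun := @Quotient.map' ℝ ℝ cSet cSet (ckF n k) (ckF_resp n k)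
  invFun := @Quotient.map' ℝ ℝ cSet cSet (ckIso n k hn).symm (ckFsymm_resp n k hn)
  left_inv := by
    intro p
    induction p using Quotient.inductionOn' with
    | h x =>
      rw [Quotient.map'_mk'', Quotient.map'_mk'']
      congr 1
      rw [← ckIso_apply hn]
      exact (ckIso n k hn).symm_apply_apply x
  right_inv := by
    intro p
    induction p using Quotient.inductionOn' with
    | h x =>
      rw [Quotient.map'_mk'', Quotient.map'_mk'']
      congr 1
      rw [show ckF n k ((ckIso n k hn).symm x) = ckIso n k hn ((ckIso n k hn).symm x) from
        (ckIso_apply hn _).symm]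
      exact (ckIso n k hn).apply_symm_apply x
  continuous_toFun := by
    rw [(@isQuotientMap_quotient_mk' ℝ _ cSet).continuous_iff]
    have : (@Quotient.map' ℝ ℝ cSet cSet (ckF n k) (ckF_resp n k)) ∘
        (@Quotient.mk' ℝ cSet) = (@Quotient.mk' ℝ cSet) ∘ (ckF n k) := by
      funext x
      exact Quotient.map'_mk'' _ _ x
    rw [this]
    exact Continuous.comp continuous_quotient_mk' (ckF_continuous n k hn)
  continuous_invFun := by
    rw [(@isQuotientMap_quotient_mk' ℝ _ cSet).continuous_iff]
    have : (@Quotient.map' ℝ ℝ cSet cSet (ckIso n k hn).symm (ckFsymm_resp n k hn)) ∘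
        (@Quotient.mk' ℝ cSet) = (@Quotient.mk' ℝ cSet) ∘ ⇑(ckIso n k hn).symm := by
      funext x
      exact Quotient.map'_mk'' _ _ x
    rw [this]
    exact Continuous.comp continuous_quotient_mk' (ckFsymm_continuous n k hn)

lemma ckHomeo_coe (hn : 2 ≤ n) (x : ℝ) :
    ckHomeo n k hn (x : Circle) = ((ckF n k x : ℝ) : Circle) :=
  @Quotient.map'_mk'' ℝ ℝ cSet cSet (ckF n k) (ckF_resp n k) x

/-! ### `n`-adic arithmetic -/

lemma isNAdic_int (n : ℕ) (z : ℤ) : IsNAdic n (z : ℝ) := ⟨z, 0, by simp⟩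

lemma isNAdic_add {n : ℕ} {x y : ℝ} (hn : 2 ≤ n) (hx : IsNAdic n x) (hy : IsNAdic n y) :
    IsNAdic n (x + y) := by
  obtain ⟨a, e, rfl⟩ := hx
  obtain ⟨b, f, rfl⟩ := hy
  refine ⟨a * n ^ f + b * n ^ e, e + f, ?_⟩
  have hN : (n : ℝ) ≠ 0 := nR_ne_zero hn
  push_cast
  rw [div_add_div _ _ (pow_ne_zero _ hN) (pow_ne_zero _ hN), ← pow_add]
  ring_nf

lemma isNAdic_neg {n : ℕ} {x : ℝ} (hx : IsNAdic n x) : IsNAdic n (-x) := by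
  obtain ⟨a, e, rfl⟩ := hx
  exact ⟨-a, e, by push_cast; ring⟩

lemma isNAdic_sub {n : ℕ} {x y : ℝ} (hn : 2 ≤ n) (hx : IsNAdic n x) (hy : IsNAdic n y) :
    IsNAdic n (x - y) := by
  rw [sub_eq_add_neg]
  exact isNAdic_add hn hx (isNAdic_neg hy)

lemma isNAdic_zpow_mul {n : ℕ} {x : ℝ} (hn : 2 ≤ n) (e : ℤ) (hx : IsNAdic n x) :
    IsNAdic n ((n : ℝ) ^ e * x) := by
  obtain ⟨a, f, rfl⟩ := hx
  have hN : (n : ℝ) ≠ 0 := nR_ne_zero hn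
  rcases le_or_gt 0 e with he | he
  · obtain ⟨d, rfl⟩ := Int.eq_ofNat_of_zero_le he
    refine ⟨a * n ^ d, f, ?_⟩
    push_cast
    rw [zpow_natCast]
    field_simp
  · have he' : e = -((-e).toNat : ℤ) := by omega
    rw [he']
    refine ⟨a, f + (-e).toNat, ?_⟩
    rw [zpow_neg, zpow_natCast, pow_add]
    rw [inv_mul_eq_div, div_div]

lemma isNAdic_fract {n : ℕ} {x : ℝ} (hn : 2 ≤ n) (hx : IsNAdic n x) :
    IsNAdic n (Int.fract x) := by
  rw [Int.fract]
  exact isNAdic_sub hn hx (isNAdic_int n ⌊x⌋)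

lemma ckPt_isNAdic (hn : 2 ≤ n) {i : ℕ} (hi : i ≤ ckM n k) : IsNAdic n (ckPt n k i) := by
  rcases eq_or_lt_of_le hi with rfl | hi
  · exact ⟨1, 0, by simp [ckPt_M]⟩
  · have hN : (0:ℝ) < n := nR_pos hn
    have hN' : (n : ℝ) ≠ 0 := ne_of_gt hN
    rw [ckPt_eq hn (by omega)]
    set q := i / (n - 1)
    set r := i % (n - 1)
    refine ⟨(n : ℤ) ^ (q + 1) - n + r, q + 1, ?_⟩
    push_cast
    field_simp
    ring

/-! ### Membership of `c_k` in `T_n` -/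

lemma ckHomeo_image (hn : 2 ≤ n) :
    ckHomeo n k hn '' nAdicPoints n = nAdicPoints n := by
  apply Set.Subset.antisymm
  · rintro p ⟨q, ⟨x, hx, rfl⟩, rfl⟩
    set x' := Int.fract x with hx'
    have hxx' : (x : Circle) = (x' : Circle) := by
      have : x = x' + (⌊x⌋ : ℤ) := by rw [hx', Int.fract]; ring
      rw [this, circle_coe_add_int]
    obtain ⟨j, hj, hj1, hj2⟩ := ckPt_covering (k := k) hn (Int.fract_nonneg x)
      (Int.fract_lt_one x)
    rw [hxx', ckHomeo_coe]
    refine ⟨ckF n k x', ?_, rfl⟩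
    rw [ckF_on hn hj ⟨hj1, le_of_lt hj2⟩]
    exact isNAdic_add hn (ckPt_isNAdic hn (by omega))
      (isNAdic_zpow_mul hn _ (isNAdic_sub hn (isNAdic_fract hn hx)
        (ckPt_isNAdic hn (le_of_lt hj))))
  · rintro p ⟨y, hy, rfl⟩
    set y' := Int.fract y with hy'
    have hyy' : (y : Circle) = (y' : Circle) := by
      have : y = y' + (⌊y⌋ : ℤ) := by rw [hy', Int.fract]; ring
      rw [this, circle_coe_add_int]
    have hy'adic : IsNAdic n y' := isNAdic_fract hn hy
    obtain ⟨j', hj', hj1, hj2⟩ := ckPt_covering (k := k) hn (Int.fract_nonneg y)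
      (Int.fract_lt_one y)
    have hM1 := ckM_pos n k
    set j := if j' = 0 then ckM n k - 1 else j' - 1 with hjdef
    have hjM : j < ckM n k := by rw [hjdef]; split <;> omega
    have hjmod : (j + 1) % ckM n k = j' := by
      rw [hjdef]
      split
      · rename_i h
        rw [h, (by omega : ckM n k - 1 + 1 = ckM n k), Nat.mod_self]
      · rename_i h
        rw [(by omega : j' - 1 + 1 = j'), Nat.mod_eq_of_lt hj']
    set x := ckPt n k j + (y' - ckPt n k j') * (n : ℝ) ^ (-(ckSl n k j)) with hxdef
    have hNpos : (0:ℝ) < (n : ℝ) ^ (-(ckSl n k j)) := zpow_pos (nR_pos hn) _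
    have hgap := ckSl_mul_gap (k := k) hn hjM
    rw [hjmod] at hgap
    have hgapj : ckPt n k (j + 1) - ckPt n k j =
        (n : ℝ) ^ (-(ckSl n k j)) * (ckPt n k (j' + 1) - ckPt n k j') := by
      rw [← hgap, zpow_neg]
      field_simp
    have hxmem : x ∈ Set.Icc (ckPt n k j) (ckPt n k (j + 1)) := by
      constructor
      · rw [hxdef]
        nlinarith
      · rw [hxdef]
        have h1 : (y' - ckPt n k j') * (n : ℝ) ^ (-(ckSl n k j)) ≤
            (ckPt n k (j' + 1) - ckPt n k j') * (n : ℝ) ^ (-(ckSl n k j)) := by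
          apply mul_le_mul_of_nonneg_right _ (le_of_lt hNpos)
          linarith
        rw [mul_comm] at h1
        linarith [hgapj]
    have hFx : ckF n k x = ckPt n k (j + 1) + (y' - ckPt n k j') := by
      rw [ckF_on hn hjM hxmem, hxdef]
      have : (n : ℝ) ^ (ckSl n k j) * (n : ℝ) ^ (-(ckSl n k j)) = 1 := by
        rw [← zpow_add₀ (nR_ne_zero hn)]
        simp
      rw [add_sub_cancel_left, ← mul_assoc, mul_comm ((n:ℝ) ^ (ckSl n k j)), mul_assoc, this]
      ring
    have hxadic : IsNAdic n x := by
      rw [hxdef, mul_comm]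
      exact isNAdic_add hn (ckPt_isNAdic hn (le_of_lt hjM))
        (isNAdic_zpow_mul hn _ (isNAdic_sub hn hy'adic (ckPt_isNAdic hn (le_of_lt hj'))))
    refine ⟨(x : Circle), ⟨x, hxadic, rfl⟩, ?_⟩
    rw [ckHomeo_coe, hFx, hyy']
    by_cases hj0 : j' = 0
    · have hjM' : j + 1 = ckM n k := by rw [hjdef, if_pos hj0]; omega
      rw [hjM', ckPt_M, hj0, ckPt_zero hn]
      have : 1 + (y' - 0) = y' + ((1 : ℤ) : ℝ) := by push_cast; ring
      rw [this, circle_coe_add_int]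
    · have hjj : j + 1 = j' := by rw [hjdef, if_neg hj0]; omega
      rw [hjj]
      norm_num

lemma ckHomeo_inT (hn : 2 ≤ n) : ckHomeo n k hn ∈ TnSet n := by
  refine ⟨ckHomeo_image hn, ckF n k, ckF_strictMono hn, fun x => ckHomeo_coe hn x, ?_, ?_⟩
  · intro x
    have := ckF_add_int n k x 1
    simpa using this
  · refine ⟨ckM n k, ckPt n k, ckSl n k,
      fun j => ckPt n k (j + 1) - (n : ℝ) ^ (ckSl n k j) * ckPt n k j,
      ckM_pos n k, ckPt_zero hn, ckPt_M n k, ?_, ?_, ?_⟩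
    · intro i hi
      linarith [ckPt_gap_pos (k := k) hn hi]
    · intro i hi
      exact ckPt_isNAdic hn hi
    · intro i hi x hx
      rw [ckF_on hn hi hx]
      ring

lemma ckHomeo_isCk (hn : 2 ≤ n) : IsCk n k (ckHomeo n k hn) := by
  intro j hj x hx
  have hjM : j < ckM n k := hj
  rw [ckHomeo_coe, ckF_on hn hjM hx]
  have hgapne : ckPt n k (j + 1) - ckPt n k j ≠ 0 :=
    ne_of_gt (ckPt_gap_pos (k := k) hn hjM)
  have hcoef : (ckPt n k ((j + 1) % ckM n k + 1) - ckPt n k ((j + 1) % ckM n k)) /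
      (ckPt n k (j + 1) - ckPt n k j) = (n : ℝ) ^ (ckSl n k j) := by
    rw [← ckSl_mul_gap hn hjM]
    field_simp
  show _ = ((ckPt n k ((j + 1) % ((k + 1) * (n - 1) + 1)) +
    (ckPt n k ((j + 1) % ((k + 1) * (n - 1) + 1) + 1) -
      ckPt n k ((j + 1) % ((k + 1) * (n - 1) + 1))) /
      (ckPt n k (j + 1) - ckPt n k j) * (x - ckPt n k j) : ℝ) : Circle)
  have hMdef : (k + 1) * (n - 1) + 1 = ckM n k := rfl
  rw [hMdef, hcoef]
  by_cases hjm : j + 1 = ckM n k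
  · rw [hjm, Nat.mod_self, ckPt_M, ckPt_zero hn]
    have : (1 : ℝ) + (n : ℝ) ^ (ckSl n k j) * (x - ckPt n k j) =
        (0 + (n : ℝ) ^ (ckSl n k j) * (x - ckPt n k j)) + ((1 : ℤ) : ℝ) := by
      push_cast; ring
    rw [this, circle_coe_add_int]
  · rw [Nat.mod_eq_of_lt (lt_of_le_of_ne hjM hjm)]

/-! ### The order of `c_k` -/

lemma homeo_pow_succ_apply (f : Circle ≃ₜ Circle) (i : ℕ) (p : Circle) :
    (f ^ (i + 1)) p = f ((f ^ i) p) := by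
  rw [pow_succ']
  rfl

/-- Iterating any element satisfying `IsCk`. -/
lemma ck_iter {f : Circle ≃ₜ Circle} (hn : 2 ≤ n) (hf : IsCk n k f) :
    ∀ i j, j < ckM n k → ∀ x ∈ Set.Icc (ckPt n k j) (ckPt n k (j + 1)),
      (f ^ i) (x : Circle) =
        ((ckPt n k ((j + i) % ckM n k) +
          (ckPt n k ((j + i) % ckM n k + 1) - ckPt n k ((j + i) % ckM n k)) /
            (ckPt n k (j + 1) - ckPt n k j) * (x - ckPt n k j) : ℝ) : Circle) := by
  intro i
  induction i with
  | zero =>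
    intro j hj x hx
    rw [Nat.add_zero, Nat.mod_eq_of_lt hj, pow_zero,
      div_self (ne_of_gt (ckPt_gap_pos (k := k) hn hj))]
    show (x : Circle) = _
    congr 1
    ring
  | succ i ih =>
    intro j hj x hx
    have hgapj : 0 < ckPt n k (j + 1) - ckPt n k j := ckPt_gap_pos (k := k) hn hj
    set j2 := (j + i) % ckM n k with hj2def
    have hj2 : j2 < ckM n k := Nat.mod_lt _ (ckM_pos n k)
    have hgapj2 : 0 < ckPt n k (j2 + 1) - ckPt n k j2 := ckPt_gap_pos (k := k) hn hj2
    set y := ckPt n k j2 +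
      (ckPt n k (j2 + 1) - ckPt n k j2) / (ckPt n k (j + 1) - ckPt n k j) *
        (x - ckPt n k j) with hydef
    have hy : y ∈ Set.Icc (ckPt n k j2) (ckPt n k (j2 + 1)) := by
      have hr : 0 ≤ (ckPt n k (j2 + 1) - ckPt n k j2) / (ckPt n k (j + 1) - ckPt n k j) :=
        le_of_lt (div_pos hgapj2 hgapj)
      constructor
      · rw [hydef]
        nlinarith [hx.1]
      · rw [hydef]
        have h1 : (ckPt n k (j2 + 1) - ckPt n k j2) / (ckPt n k (j + 1) - ckPt n k j) *
            (x - ckPt n k j) ≤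
            (ckPt n k (j2 + 1) - ckPt n k j2) / (ckPt n k (j + 1) - ckPt n k j) *
            (ckPt n k (j + 1) - ckPt n k j) := by
          apply mul_le_mul_of_nonneg_left _ hr
          linarith [hx.2]
        rw [div_mul_cancel₀ _ (ne_of_gt hgapj)] at h1
        linarith
    rw [homeo_pow_succ_apply, ih j hj x hx, ← hydef, hf j2 hj2 y hy]
    have hmod : (j2 + 1) % ((k + 1) * (n - 1) + 1) = (j + (i + 1)) % ckM n k := by
      show (j2 + 1) % ckM n k = _
      rw [hj2def, Nat.mod_add_mod, ← Nat.add_assoc]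
    rw [hmod]
    congr 1
    have hyx : y - ckPt n k j2 =
        (ckPt n k (j2 + 1) - ckPt n k j2) / (ckPt n k (j + 1) - ckPt n k j) *
          (x - ckPt n k j) := by
      rw [hydef]; ring
    rw [hyx]
    field_simp

lemma circle_exists_rep (p : Circle) : ∃ x : ℝ, 0 ≤ x ∧ x < 1 ∧ p = (x : Circle) := by
  obtain ⟨u, rfl⟩ := QuotientAddGroup.mk_surjective p
  refine ⟨Int.fract u, Int.fract_nonneg u, Int.fract_lt_one u, ?_⟩
  have : u = Int.fract u + (⌊u⌋ : ℤ) := by rw [Int.fract]; ring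
  conv_lhs => rw [this]
  exact circle_coe_add_int _ _

lemma ck_pow_M {f : Circle ≃ₜ Circle} (hn : 2 ≤ n) (hf : IsCk n k f) :
    f ^ (ckM n k) = 1 := by
  apply Homeomorph.ext
  intro p
  obtain ⟨x, hx0, hx1, rfl⟩ := circle_exists_rep p
  obtain ⟨j, hj, hj1, hj2⟩ := ckPt_covering (k := k) hn hx0 hx1
  rw [ck_iter hn hf (ckM n k) j hj x ⟨hj1, le_of_lt hj2⟩]
  rw [Nat.add_mod_right, Nat.mod_eq_of_lt hj,
    div_self (ne_of_gt (ckPt_gap_pos (k := k) hn hj))]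
  show _ = (x : Circle)
  congr 1
  ring

lemma ck_pow_ne {f : Circle ≃ₜ Circle} (hn : 2 ≤ n) (hf : IsCk n k f) :
    ∀ i, 0 < i → i < ckM n k → f ^ i ≠ 1 := by
  intro i hi0 hiM hcon
  have ht1 : 0 < ckPt n k 1 := by
    have := ckPt_gap_pos (k := k) hn (ckM_pos n k)
    rw [ckPt_zero hn] at this
    simpa using this
  have h0mem : (0 : ℝ) ∈ Set.Icc (ckPt n k 0) (ckPt n k 1) := by
    rw [ckPt_zero hn]
    exact ⟨le_rfl, le_of_lt ht1⟩
  have hiter := ck_iter hn hf i 0 (ckM_pos n k) 0 h0mem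
  rw [hcon] at hiter
  have h1 : ((0 : ℝ) : Circle) = (1 : Circle ≃ₜ Circle) ((0 : ℝ) : Circle) := rfl
  rw [← h1] at hiter
  rw [Nat.zero_add, Nat.mod_eq_of_lt hiM, ckPt_zero hn] at hiter
  have hsimp : ckPt n k i + (ckPt n k (i + 1) - ckPt n k i) /
      (ckPt n k 1 - 0) * ((0 : ℝ) - 0) = ckPt n k i := by ring
  rw [hsimp] at hiter
  have hmem := (QuotientAddGroup.eq_iff_sub_mem).mp hiter
  obtain ⟨z, hz⟩ := (AddSubgroup.mem_zmultiples_iff).mp hmem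
  have hz' : (z : ℝ) = -(ckPt n k i) := by
    rw [zsmul_eq_mul] at hz
    linarith [hz]
  have hti0 : 0 < ckPt n k i := by
    have := ckPt_lt_of_lt (k := k) hn hi0 (le_of_lt hiM)
    rwa [ckPt_zero hn] at this
  have hti1 : ckPt n k i < 1 := ckPt_lt_one hn hiM
  have hz1 : (-1 : ℝ) < (z : ℝ) := by rw [hz']; linarith
  have hz2 : (z : ℝ) < 0 := by rw [hz']; linarith
  have hz1' : (-1 : ℤ) < z := by exact_mod_cast hz1
  have hz2' : z < 0 := by exact_mod_cast hz2
  omega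

end CkAux

/-- Let `n ≥ 2` and `k ≥ 0`.  The element `c_k ∈ T_n` exists and has
order exactly `(k+1)(n-1)+1`.  (In particular, `T_n` contains torsion elements of
arbitrarily large order.) -/
theorem ck_orderOf (n : ℕ) (hn : 2 ≤ n) (k : ℕ) :
    (∃ f : Circle ≃ₜ Circle, f ∈ TnSet n ∧ IsCk n k f) ∧
    (∀ f : Circle ≃ₜ Circle, f ∈ TnSet n → IsCk n k f →
      orderOf f = (k + 1) * (n - 1) + 1) := by
  constructor
  · exact ⟨ckHomeo n k hn, ckHomeo_inT hn, ckHomeo_isCk hn⟩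
  · intro f _ hf
    have hM := ckM_pos n k
    rw [show (k + 1) * (n - 1) + 1 = ckM n k from rfl]
    exact (orderOf_eq_iff hM).mpr
      ⟨ck_pow_M hn hf, fun i hiM hi0 => ck_pow_ne hn hf i hi0 hiM⟩


end ThompsonPaper
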